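/- Let f : ℝⁿ → ℝ be differentiable with coordinate-wise Lipschitz constants Lᵢ > 0 (|∇ᵢf(x + α eᵢ) − ∇ᵢf(x)| ≤ Lᵢ|α| for all x, α, i) and suppose f is μ_L-strongly convex with respect to the norm ‖x‖_L = Σᵢ √(Lᵢ)|xᵢ| for some μ_L > 0, with minimizer x*. If x^{k+1} = x^k − (1/L_{i_k})∇_{i_k}f(x^k)e_{i_k} where i_k is chosen by the Gauss-Southwell-Lipschitz rule i_k ∈ argmax_i |∇ᵢf(x^k)|/√(Lᵢ), then f(x^{k+1}) − f(x*) ≤ (1 − μ_L)(f(x^k) − f(x*)). -/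

import Mathlib

open scoped RealInnerProductSpace

/-- Coordinate-wise descent lemma: along coordinate `i`, a coordinate-wise Lipschitz
gradient gives the quadratic upper bound. -/
lemma coord_descent_aux {n : ℕ}
    (f : EuclideanSpace ℝ (Fin n) → ℝ)
    (f' : EuclideanSpace ℝ (Fin n) → EuclideanSpace ℝ (Fin n))
    (hf : ∀ x, HasGradientAt f (f' x) x)
    (Li : ℝ) (i : Fin n)
    (hlipi : ∀ (x : EuclideanSpace ℝ (Fin n)) (α : ℝ),
      |f' (x + α • EuclideanSpace.single i 1) i - f' x i| ≤ Li * |α|)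
    (x : EuclideanSpace ℝ (Fin n)) (α : ℝ) :
    f (x + α • EuclideanSpace.single i 1) ≤ f x + α * f' x i + Li / 2 * α ^ 2 := by
  set e : EuclideanSpace ℝ (Fin n) := EuclideanSpace.single i 1 with he
  -- the curve t ↦ x + (t*α) • e
  have hcurve : ∀ t : ℝ, HasDerivAt (fun t : ℝ => x + (t * α) • e) (α • e) t := by
    intro t
    have h1 : HasDerivAt (fun t : ℝ => t * α) α t := by
      simpa using (hasDerivAt_id t).mul_const α
    simpa using ((h1.smul_const e).const_add x)
  have hg : ∀ t : ℝ, HasDerivAt (fun t : ℝ => f (x + (t * α) • e))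
      (α * f' (x + (t * α) • e) i) t := by
    intro t
    have hfd := (hf (x + (t * α) • e)).hasFDerivAt
    have h1 := hfd.comp_hasDerivAt t (hcurve t)
    have h2 : ((InnerProductSpace.toDual ℝ (EuclideanSpace ℝ (Fin n)))
        (f' (x + (t * α) • e))) (α • e) = α * f' (x + (t * α) • e) i := by
      rw [InnerProductSpace.toDual_apply_apply, real_inner_smul_right, he,
        EuclideanSpace.inner_single_right]
      simp
    rw [h2] at h1
    exact h1
  -- ψ t = upper bound minus f along the curve
  set ψ : ℝ → ℝ := fun t => f x + (t * α) * f' x i + Li / 2 * (t * α) ^ 2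
      - f (x + (t * α) • e) with hψ
  have hψd : ∀ t : ℝ, HasDerivAt ψ
      (α * f' x i + Li * α ^ 2 * t - α * f' (x + (t * α) • e) i) t := by
    intro t
    have h1 : HasDerivAt (fun t : ℝ => f x + (t * α) * f' x i + Li / 2 * (t * α) ^ 2)
        (α * f' x i + Li * α ^ 2 * t) t := by
      have ha : HasDerivAt (fun t : ℝ => (t * α) * f' x i) (α * f' x i) t := by
        simpa [mul_comm, mul_assoc] using
          ((hasDerivAt_id t).mul_const α).mul_const (f' x i)
      have hb : HasDerivAt (fun t : ℝ => Li / 2 * (t * α) ^ 2) (Li * α ^ 2 * t) t := by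
        have : HasDerivAt (fun t : ℝ => (t * α) ^ 2) (2 * (t * α) * α) t := by
          simpa using ((hasDerivAt_id t).mul_const α).fun_pow 2
        have := this.const_mul (Li / 2)
        exact this.congr_deriv (by ring)
      exact (ha.const_add (f x)).add hb
    exact h1.sub (hg t)
  have hψc : Continuous ψ := by
    have : Differentiable ℝ ψ := fun t => (hψd t).differentiableAt
    exact this.continuous
  -- derivative of ψ is nonneg on [0,∞)
  have hmono : MonotoneOn ψ (Set.Icc (0:ℝ) 1) := by
    apply monotoneOn_of_deriv_nonneg (convex_Icc 0 1) hψc.continuousOn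
    · intro t _
      exact (hψd t).differentiableAt.differentiableWithinAt
    · intro t ht
      rw [(hψd t).deriv]
      rw [interior_Icc, Set.mem_Ioo] at ht
      have hlt := hlipi x (t * α)
      have h1 : α * f' x i - α * f' (x + (t * α) • e) i ≥ -(Li * α ^ 2 * t) := by
        have h2 : α * (f' x i - f' (x + (t * α) • e) i)
            ≥ -(|α| * |f' (x + (t * α) • e) i - f' x i|) := by
          have := abs_mul α (f' (x + (t * α) • e) i - f' x i)
          have h3 := neg_abs_le (α * (f' (x + (t * α) • e) i - f' x i))
          nlinarith [abs_nonneg α, neg_abs_le (α * (f' x i - f' (x + (t * α) • e) i)),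
            le_abs_self (α * (f' x i - f' (x + (t * α) • e) i)),
            abs_mul α (f' x i - f' (x + (t * α) • e) i), abs_sub_comm (f' x i) (f' (x + (t * α) • e) i)]
        have h4 : |α| * |f' (x + (t * α) • e) i - f' x i| ≤ |α| * (Li * |t * α|) :=
          mul_le_mul_of_nonneg_left hlt (abs_nonneg α)
        have h5 : |t * α| = t * |α| := by
          rw [abs_mul, abs_of_pos ht.1]
        have h6 : |α| * |α| = α ^ 2 := by rw [← abs_mul, abs_mul_self]; ring
        have h7 : |α| * (Li * |t * α|) = Li * α ^ 2 * t := by rw [h5, ← h6]; ring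
        linarith
      nlinarith
  have h01 : ψ 0 ≤ ψ 1 := hmono (by simp) (by norm_num) (by norm_num)
  simp only [hψ, zero_mul, one_mul] at h01
  simp only [zero_smul, add_zero, ne_eq, OfNat.ofNat_ne_zero, not_false_eq_true,
    zero_pow, mul_zero] at h01
  linarith

/-- convergence rate of the Gauss-Southwell-Lipschitz rule under
strong convexity in the norm `‖x‖_L = ∑ᵢ √(Lᵢ)|xᵢ|`. -/
theorem gauss_southwell_lipschitz_rate {n : ℕ}
    (f : EuclideanSpace ℝ (Fin n) → ℝ)
    (f' : EuclideanSpace ℝ (Fin n) → EuclideanSpace ℝ (Fin n))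
    (hf : ∀ x, HasGradientAt f (f' x) x)
    (L : Fin n → ℝ) (hL : ∀ i, 0 < L i)
    (hlip : ∀ (x : EuclideanSpace ℝ (Fin n)) (α : ℝ) (i : Fin n),
      |f' (x + α • EuclideanSpace.single i 1) i - f' x i| ≤ L i * |α|)
    (μL : ℝ) (hμL : 0 < μL)
    (hsc : ∀ x y, f y ≥ f x + ⟪f' x, y - x⟫
      + μL / 2 * (∑ i, Real.sqrt (L i) * |y i - x i|) ^ 2)
    (xs : EuclideanSpace ℝ (Fin n)) (hxs : ∀ y, f xs ≤ f y)
    (xk : EuclideanSpace ℝ (Fin n)) (ik : Fin n)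
    (hik : ∀ j, |f' xk j| / Real.sqrt (L j) ≤ |f' xk ik| / Real.sqrt (L ik))
    (xk1 : EuclideanSpace ℝ (Fin n))
    (hstep : xk1 = xk - ((1 / L ik) * f' xk ik) • EuclideanSpace.single ik 1) :
    f xk1 - f xs ≤ (1 - μL) * (f xk - f xs) := by
  have hLik := hL ik
  have hsq : Real.sqrt (L ik) ^ 2 = L ik := Real.sq_sqrt hLik.le
  have hsqpos : 0 < Real.sqrt (L ik) := Real.sqrt_pos.mpr hLik
  set G : ℝ := |f' xk ik| / Real.sqrt (L ik) with hG
  have hGnonneg : 0 ≤ G := div_nonneg (abs_nonneg _) hsqpos.le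
  have hG2 : G ^ 2 = (f' xk ik) ^ 2 / L ik := by
    rw [hG, div_pow, sq_abs, hsq]
  -- Step 1: descent
  have hdesc : f xk1 ≤ f xk - G ^ 2 / 2 := by
    have h := coord_descent_aux f f' hf (L ik) ik (fun x α => hlip x α ik) xk
      (-((1 / L ik) * f' xk ik))
    have hx1 : xk1 = xk + (-((1 / L ik) * f' xk ik)) • EuclideanSpace.single ik 1 := by
      rw [hstep]; module
    rw [← hx1] at h
    have : f xk + (-((1 / L ik) * f' xk ik)) * f' xk ik
        + L ik / 2 * (-((1 / L ik) * f' xk ik)) ^ 2 = f xk - (f' xk ik) ^ 2 / (2 * L ik) := by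
      field_simp; ring
    rw [this] at h
    rw [hG2]
    calc f xk1 ≤ f xk - (f' xk ik) ^ 2 / (2 * L ik) := h
      _ = f xk - (f' xk ik) ^ 2 / L ik / 2 := by ring
  -- Step 2: strong convexity gap bound
  have hgap : f xk - f xs ≤ G ^ 2 / (2 * μL) := by
    have h := hsc xk xs
    set S : ℝ := ∑ i, Real.sqrt (L i) * |xs i - xk i| with hS
    have hSnonneg : 0 ≤ S :=
      Finset.sum_nonneg fun i _ => mul_nonneg (Real.sqrt_nonneg _) (abs_nonneg _)
    have hinner : ⟪f' xk, xs - xk⟫ ≥ -(G * S) := by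
      have hle : |⟪f' xk, xs - xk⟫| ≤ G * S := by
        rw [PiLp.inner_apply]
        simp only [RCLike.inner_apply, conj_trivial]
        rw [show (∑ x, (xs - xk) x * f' xk x) = ∑ i, f' xk i * (xs - xk) i from
          Finset.sum_congr rfl fun i _ => mul_comm _ _]
        calc |∑ i, f' xk i * (xs - xk) i| ≤ ∑ i, |f' xk i * (xs - xk) i| :=
              Finset.abs_sum_le_sum_abs _ _
          _ ≤ ∑ i, G * (Real.sqrt (L i) * |(xs - xk) i|) := by
              apply Finset.sum_le_sum
              intro i _
              rw [abs_mul]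
              have hsi : 0 < Real.sqrt (L i) := Real.sqrt_pos.mpr (hL i)
              have hb : |f' xk i| ≤ G * Real.sqrt (L i) := by
                have := (div_le_iff₀ hsi).mp (hik i)
                linarith [this]
              calc |f' xk i| * |(xs - xk) i|
                  ≤ G * Real.sqrt (L i) * |(xs - xk) i| :=
                    mul_le_mul_of_nonneg_right hb (abs_nonneg _)
                _ = G * (Real.sqrt (L i) * |(xs - xk) i|) := by ring
          _ = G * S := by
              rw [hS, Finset.mul_sum]
              refine Finset.sum_congr rfl fun i _ => ?_
              have hzi : (xs - xk) i = xs i - xk i := by simp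
              rw [hzi]
      nlinarith [neg_abs_le (⟪f' xk, xs - xk⟫ : ℝ)]
    have h2 : f xs ≥ f xk - G * S + μL / 2 * S ^ 2 := by
      have := hsc xk xs
      rw [← hS] at this
      linarith [hinner, this]
    have h3 : (f xk - f xs) * (2 * μL) ≤ G ^ 2 := by
      nlinarith [sq_nonneg (G - μL * S)]
    exact (le_div_iff₀ (by positivity)).mpr h3
  have hge : f xs ≤ f xk1 := hxs xk1
  have h4 : μL * (f xk - f xs) ≤ G ^ 2 / 2 := by
    have := mul_le_mul_of_nonneg_left hgap hμL.le
    have heq : μL * (G ^ 2 / (2 * μL)) = G ^ 2 / 2 := by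
      field_simp
    linarith [heq ▸ this]
  linarith
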